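/- Let α, β ∈ C with |α|² + |β|² = 1/2. Then the 2×4 matrix M with columns (α, β)ᵀ, (α, −β)ᵀ, (β, α)ᵀ, (β, −α)ᵀ satisfies M M† = I_2, and the 4×4 matrix M̃ obtained by appending the two rows (β̄, β̄, −ᾱ, −ᾱ) and (−ᾱ, ᾱ, β̄, −β̄) is unitary. -/

import Mathlib

open Matrix

/-- Neumark extension of the `ℤ₂×ℤ₂`-covariant qubit POVM: for `|α|² + |β|² = 1/2` the
matrix `M` with columns `(α,β)ᵀ, (α,-β)ᵀ, (β,α)ᵀ, (β,-α)ᵀ` satisfies `M Mᴴ = 1`, and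
appending the rows `(β̄, β̄, -ᾱ, -ᾱ)` and `(-ᾱ, ᾱ, β̄, -β̄)` yields a unitary `M̃`. -/
theorem stmt_19 (α β : ℂ) (h : ‖α‖ ^ 2 + ‖β‖ ^ 2 = 1 / 2)
    (M : Matrix (Fin 2) (Fin 4) ℂ)
    (hM : M = !![α, α, β, β; β, -β, α, -α])
    (Mt : Matrix (Fin 4) (Fin 4) ℂ)
    (hMt : Mt = !![α, α, β, β;
                   β, -β, α, -α;
                   (starRingEnd ℂ) β, (starRingEnd ℂ) β, -(starRingEnd ℂ) α, -(starRingEnd ℂ) α;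
                   -(starRingEnd ℂ) α, (starRingEnd ℂ) α, (starRingEnd ℂ) β, -(starRingEnd ℂ) β]) :
    M * Mᴴ = 1 ∧ Mt ∈ Matrix.unitaryGroup (Fin 4) ℂ := by
  have hr : Complex.normSq α + Complex.normSq β = 1 / 2 := by
    rw [← Complex.sq_norm, ← Complex.sq_norm]; exact h
  have h' : α * (starRingEnd ℂ) α + β * (starRingEnd ℂ) β = 1 / 2 := by
    rw [Complex.mul_conj, Complex.mul_conj, ← Complex.ofReal_add, hr]; norm_num
  subst hM hMt
  constructor
  · ext i j
    fin_cases i <;> fin_cases j <;>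
      simp [Matrix.mul_apply, Fin.sum_univ_four, Matrix.one_apply] <;>
      linear_combination (2:ℂ) * h'
  · rw [Matrix.mem_unitaryGroup_iff]
    ext i j
    fin_cases i <;> fin_cases j <;>
      simp [Matrix.mul_apply, Fin.sum_univ_four, Matrix.one_apply, star_eq_conjTranspose, mul_comm] <;>
      linear_combination (2:ℂ) * h'
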